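/- A real representation m of quaternionic type of a compact Lie algebra h is never an s-representation of h. -/

import Mathlib

open scoped BigOperators

/-- An irreducible real representation `m` of quaternionic type of
a compact Lie algebra `(h,B_h)` (so `m` carries invariant anticommuting
orthogonal complex structures `I`, `J`, and its commuting algebra is spanned by
`id, I, J, IJ`) is never an s-representation of `h`: the bracket on `h ⊕ m`
defined by `B_h(a,[v,w]) = B_m(av,w)` cannot satisfy the Jacobi identity. -/
theorem quaternionic_type_never_s_representation
    {H M : Type*} [LieRing H] [LieAlgebra ℝ H] [Nontrivial H]
    [AddCommGroup M] [Module ℝ M]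
    (ρ : H →ₗ[ℝ] M →ₗ[ℝ] M)
    (hρLie : ∀ (a b : H) (v : M), ρ ⁅a, b⁆ v = ρ a (ρ b v) - ρ b (ρ a v))
    (hfaith : Function.Injective ρ)
    (BH : H →ₗ[ℝ] H →ₗ[ℝ] ℝ) (BM : M →ₗ[ℝ] M →ₗ[ℝ] ℝ)
    (hBHsym : ∀ x y : H, BH x y = BH y x)
    (hBHpos : ∀ x : H, x ≠ 0 → 0 < BH x x)
    (hBHinv : ∀ a x y : H, BH ⁅a, x⁆ y + BH x ⁅a, y⁆ = 0)
    (hBMsym : ∀ u v : M, BM u v = BM v u)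
    (hBMpos : ∀ v : M, v ≠ 0 → 0 < BM v v)
    (hskew : ∀ (a : H) (u v : M), BM (ρ a u) v + BM u (ρ a v) = 0)
    (hirr : ∀ p : Submodule ℝ M, (∀ (a : H), ∀ v ∈ p, ρ a v ∈ p) → p = ⊥ ∨ p = ⊤)
    (n : ℕ) (e : Module.Basis (Fin n) ℝ M)
    (hON : ∀ i j, BM (e i) (e j) = if i = j then 1 else 0)
    (I J : M →ₗ[ℝ] M)
    (hI2 : ∀ v : M, I (I v) = -v) (hJ2 : ∀ v : M, J (J v) = -v)
    (hIJ : ∀ v : M, I (J v) = - J (I v))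
    (hIequiv : ∀ (a : H) (v : M), I (ρ a v) = ρ a (I v))
    (hJequiv : ∀ (a : H) (v : M), J (ρ a v) = ρ a (J v))
    (hIorth : ∀ u v : M, BM (I u) (I v) = BM u v)
    (hJorth : ∀ u v : M, BM (J u) (J v) = BM u v)
    (hquat : ∀ f : M →ₗ[ℝ] M, (∀ (a : H) (v : M), f (ρ a v) = ρ a (f v)) →
      ∃ α β γ δ : ℝ,
        f = α • LinearMap.id + β • I + γ • J + δ • (I ∘ₗ J))
    (br : M →ₗ[ℝ] M →ₗ[ℝ] H)
    (hbr : ∀ (a : H) (v w : M), BH a (br v w) = BM (ρ a v) w)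
    (hequiv : ∀ (a : H) (v w : M), ⁅a, br v w⁆ = br (ρ a v) w + br v (ρ a w))
    (hjacobi : ∀ u v w : M, ρ (br u v) w + ρ (br v w) u + ρ (br w u) v = 0) :
    False := by
  classical
  -- nonnegativity / nondegeneracy of the forms
  have hBHnn : ∀ x : H, 0 ≤ BH x x := by
    intro x
    rcases eq_or_ne x 0 with h | h
    · simp [h]
    · exact (hBHpos x h).le
  have hBMnd : ∀ v : M, (∀ w, BM v w = 0) → v = 0 := by
    intro v hv
    by_contra h
    exact absurd (hv v) (ne_of_gt (hBMpos v h))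
  have hBHnd : ∀ x : H, (∀ a, BH a x = 0) → x = 0 := by
    intro x hx
    by_contra h
    exact absurd (hx x) (ne_of_gt (hBHpos x h))
  -- basis expansion
  have hrepr : ∀ (x : M) (j : Fin n), BM x (e j) = e.repr x j := by
    intro x j
    conv_lhs => rw [← e.sum_repr x]
    simp only [map_sum, LinearMap.sum_apply, map_smul, LinearMap.smul_apply, hON, smul_eq_mul, mul_ite, mul_one, mul_zero, Finset.sum_ite_eq', Finset.mem_univ, if_true]
  have hexp : ∀ x : M, x = ∑ j, BM x (e j) • e j := by
    intro x
    simp_rw [hrepr]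
    exact (e.sum_repr x).symm
  have lexp : ∀ (φ : M →ₗ[ℝ] ℝ) (x : M), φ x = ∑ j, BM x (e j) * φ (e j) := by
    intro φ x
    conv_lhs => rw [hexp x]
    simp [smul_eq_mul]
  -- antisymmetry of br
  have brskew : ∀ v w : M, br w v = - br v w := by
    intro v w
    have h0 : br v w + br w v = 0 := by
      apply hBHnd
      intro a
      rw [map_add, hbr, hbr, hBMsym ((ρ a) w) v]
      exact hskew a v w
    exact eq_neg_of_add_eq_zero_right h0
  -- skewness of I, J
  have Iskew : ∀ u v : M, BM (I u) v = - BM u (I v) := by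
    intro u v
    have h := hIorth u (I v)
    rw [hI2 v, map_neg] at h
    linarith
  -- br u (I v) is symmetric in u, v
  have brI : ∀ u v : M, br u (I v) = br v (I u) := by
    intro u v
    have h0 : br u (I v) - br v (I u) = 0 := by
      apply hBHnd
      intro a
      rw [map_sub, hbr, hbr]
      have e1 := Iskew ((ρ a) u) v
      rw [hIequiv a u] at e1
      have e3 := hskew a (I u) v
      have e4 := hBMsym (I u) ((ρ a) v)
      linarith
    exact sub_eq_zero.mp h0
  -- trace cyclicity
  have trcyc : ∀ A B : M →ₗ[ℝ] M,
      (∑ i, BM (A (B (e i))) (e i)) = ∑ i, BM (B (A (e i))) (e i) := by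
    intro A B
    have h1 : ∀ i : Fin n, BM (A (B (e i))) (e i)
        = ∑ j, BM (B (e i)) (e j) * BM (A (e j)) (e i) := by
      intro i
      have h := lexp ((LinearMap.flip BM (e i)).comp A) (B (e i))
      simpa only [LinearMap.comp_apply, LinearMap.flip_apply] using h
    have h2 : ∀ i : Fin n, BM (B (A (e i))) (e i)
        = ∑ j, BM (A (e i)) (e j) * BM (B (e j)) (e i) := by
      intro i
      have h := lexp ((LinearMap.flip BM (e i)).comp B) (A (e i))
      simpa only [LinearMap.comp_apply, LinearMap.flip_apply] using h
    simp_rw [h1, h2]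
    rw [Finset.sum_comm]
    exact Finset.sum_congr rfl fun i _ => Finset.sum_congr rfl fun j _ => mul_comm _ _
  -- a map J-anticommuting has zero trace
  have trJ0 : ∀ A : M →ₗ[ℝ] M, (∀ x, J (A x) = - A (J x)) →
      (∑ i, BM (A (e i)) (e i)) = 0 := by
    intro A hA
    have key := trcyc (J ∘ₗ A) J
    simp only [LinearMap.comp_apply] at key
    have l1 : ∀ i : Fin n, J (A (J (e i))) = A (e i) := by
      intro i
      rw [hA (J (e i)), hJ2, map_neg, neg_neg]
    have l2 : ∀ i : Fin n, J (J (A (e i))) = - A (e i) := fun i => hJ2 _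
    simp_rw [l1, l2, map_neg, LinearMap.neg_apply] at key
    rw [Finset.sum_neg_distrib] at key
    linarith
  -- trace of I ∘ ρ a vanishes
  have trIρ : ∀ a : H, (∑ i, BM (I ((ρ a) (e i))) (e i)) = 0 := by
    intro a
    have h := trJ0 (I ∘ₗ ρ a) ?_
    · simpa only [LinearMap.comp_apply] using h
    · intro x
      simp only [LinearMap.comp_apply]
      rw [← hJequiv a x, hIJ, neg_neg]
  -- key skew-sum fact for coefficients of I
  have csum0 : ∀ i j : Fin n, BM (I (e i)) (e j) + BM (I (e j)) (e i) = 0 := by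
    intro i j
    have h1 := Iskew (e j) (e i)
    have h2 := hBMsym (e j) (I (e i))
    linarith
  -- Q(Iv,w) + Q(v,Iw) = 0
  have QI : ∀ v w : M,
      (∑ i, BH (br (e i) (I v)) (br (e i) w))
        + (∑ i, BH (br (e i) v) (br (e i) (I w))) = 0 := by
    intro v w
    have h1 : ∀ i : Fin n, BH (br (e i) (I v)) (br (e i) w)
        = ∑ j, BM (I (e i)) (e j) * BH (br (e j) v) (br w (e i)) := by
      intro i
      rw [brI]
      have h := lexp ((LinearMap.flip BH (br (e i) w)).comp (br v)) (I (e i))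
      simp only [LinearMap.comp_apply, LinearMap.flip_apply] at h
      rw [h]
      refine Finset.sum_congr rfl fun j _ => ?_
      rw [brskew (e j) v, brskew w (e i)]
      simp [map_neg, LinearMap.neg_apply]
    have h2 : ∀ i : Fin n, BH (br (e i) v) (br (e i) (I w))
        = ∑ j, BM (I (e i)) (e j) * BH (br (e i) v) (br w (e j)) := by
      intro i
      rw [brI]
      have h := lexp ((BH (br (e i) v)).comp (br w)) (I (e i))
      simp only [LinearMap.comp_apply] at h
      rw [h]
    simp_rw [h1, h2]
    have h3 : (∑ i, ∑ j, BM (I (e i)) (e j) * BH (br (e i) v) (br w (e j)))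
        = ∑ i, ∑ j, BM (I (e j)) (e i) * BH (br (e j) v) (br w (e i)) :=
      Finset.sum_comm
    rw [h3, ← Finset.sum_add_distrib]
    refine Finset.sum_eq_zero fun i _ => ?_
    rw [← Finset.sum_add_distrib]
    refine Finset.sum_eq_zero fun j _ => ?_
    rw [← add_mul, csum0 i j, zero_mul]
  -- Bianchi: Q(w, Iv) - Q(v, Iw) = 0
  have bianchi : ∀ v w : M,
      (∑ i, BH (br (e i) w) (br (e i) (I v)))
        - (∑ i, BH (br (e i) v) (br (e i) (I w))) = 0 := by
    intro v w
    have h0 : (∑ i, BM ((ρ (br v w)) (e i)) (I (e i))) = 0 := by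
      have h1 := trIρ (br v w)
      have h2 : ∀ i : Fin n, BM ((ρ (br v w)) (e i)) (I (e i))
          = - BM (I ((ρ (br v w)) (e i))) (e i) := by
        intro i
        have := Iskew ((ρ (br v w)) (e i)) (e i)
        linarith
      simp_rw [h2]
      rw [Finset.sum_neg_distrib, h1, neg_zero]
    have h3 : ∀ i : Fin n, BM ((ρ (br v w)) (e i)) (I (e i))
        = BH (br (e i) w) (br (e i) (I v)) - BH (br (e i) v) (br (e i) (I w)) := by
      intro i
      have hj := hjacobi v w (e i)
      have h4 : (ρ (br v w)) (e i)
          = - ((ρ (br w (e i))) v) - ((ρ (br (e i) v)) w) := by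
        rw [add_assoc, add_eq_zero_iff_eq_neg] at hj
        rw [hj, neg_add, sub_eq_add_neg]
      rw [h4]
      simp only [map_sub, map_neg, LinearMap.sub_apply, LinearMap.neg_apply]
      rw [← hbr, ← hbr, brI v (e i), brI w (e i), brskew (e i) w]
      simp only [map_neg, LinearMap.neg_apply]
      ring
    simp_rw [h3] at h0
    rwa [Finset.sum_sub_distrib] at h0
  -- hence Q(Iv, w) = 0 for all v, w
  have QA0 : ∀ v w : M, (∑ i, BH (br (e i) (I v)) (br (e i) w)) = 0 := by
    intro v w
    have h1 := QI v w
    have h2 := bianchi v w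
    have h3 : (∑ i, BH (br (e i) w) (br (e i) (I v)))
        = ∑ i, BH (br (e i) (I v)) (br (e i) w) :=
      Finset.sum_congr rfl fun i _ => hBHsym _ _
    rw [h3] at h2
    have h4 : (∑ i, BH (br (e i) v) (br (e i) (I w)))
        = ∑ i, BH (br (e i) (I w)) (br (e i) v) :=
      Finset.sum_congr rfl fun i _ => hBHsym _ _
    linarith
  -- hence Q ≡ 0, so br e_i u = 0
  have Q0 : ∀ u : M, (∑ i, BH (br (e i) u) (br (e i) u)) = 0 := by
    intro u
    have h1 := QA0 (-(I u)) u
    have h2 : I (-(I u)) = u := by rw [map_neg, hI2, neg_neg]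
    rwa [h2] at h1
  have brz : ∀ (i : Fin n) (u : M), br (e i) u = 0 := by
    intro i u
    by_contra hne
    have hpos := hBHpos _ hne
    have hle : ∀ j ∈ Finset.univ, (0:ℝ) ≤ BH (br (e j) u) (br (e j) u) :=
      fun j _ => hBHnn _
    have := (Finset.sum_eq_zero_iff_of_nonneg hle).mp (Q0 u) i (Finset.mem_univ i)
    linarith
  have brall : ∀ u v : M, br u v = 0 := by
    intro u v
    conv_lhs => rw [hexp u]
    simp [brz]
  -- so ρ a = 0 for all a, contradicting faithfulness + nontriviality
  have ρz : ∀ a : H, ρ a = 0 := by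
    intro a
    apply LinearMap.ext
    intro v
    rw [LinearMap.zero_apply]
    apply hBMnd
    intro w
    rw [← hbr, brall, map_zero]
  obtain ⟨a, b, hab⟩ := exists_pair_ne H
  apply hab
  apply hfaith
  rw [ρz a, ρz b]
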